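/- arXiv:1807.02185 — 11 statements merged into one kernel-verified Lean document; each statement's English description precedes it below -/
import Mathlib

section
/- Let σ ∈ {1,−1} and let u : ℝ × ℝ → ℂ be twice continuously differentiable, and define v : ℝ × ℝ → ℂ by v(x,t) = u(−x,t). Then u satisfies the reverse-space nonlocal NLS equation i·uₜ(x,t) + uₓₓ(x,t) + 2σ[|u(x,t)|² + |u(−x,t)|²]u(x,t) = 0 for all (x,t) ∈ ℝ² if and only if the pair (u,v) satisfies the Manakov system for all (x,t) ∈ ℝ². -/
open Complex

/-- Partial derivative in the second (time) variable. -/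
noncomputable def dt (f : ℝ × ℝ → ℂ) (x t : ℝ) : ℂ :=
  deriv (fun τ : ℝ => f (x, τ)) t

/-- Second partial derivative in the first (space) variable. -/
noncomputable def dxx (f : ℝ × ℝ → ℂ) (x t : ℝ) : ℂ :=
  deriv (deriv (fun y : ℝ => f (y, t))) x

lemma dt_refl (u v : ℝ × ℝ → ℂ) (hv : ∀ x t : ℝ, v (x, t) = u (-x, t)) (x t : ℝ) :
    dt v x t = dt u (-x) t := by
  unfold dt
  congr 1
  funext τ
  exact hv x τ

lemma dxx_refl (u v : ℝ × ℝ → ℂ) (hv : ∀ x t : ℝ, v (x, t) = u (-x, t)) (x t : ℝ) :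
    dxx v x t = dxx u (-x) t := by
  unfold dxx
  have h1 : (fun y : ℝ => v (y, t)) = fun y : ℝ => u (-y, t) := by
    funext y; exact hv y t
  rw [h1]
  have h2 : deriv (fun y : ℝ => u (-y, t)) =
      fun y : ℝ => -(deriv (fun z : ℝ => u (z, t)) (-y)) := by
    funext y
    exact deriv_comp_neg (fun z : ℝ => u (z, t)) y
  rw [h2]
  rw [deriv.fun_neg, deriv_comp_neg (deriv (fun z : ℝ => u (z, t))) x, neg_neg]

theorem reverse_space_nonlocal_NLS_iff_Manakov
    (σ : ℝ) (hσ : σ = 1 ∨ σ = -1)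
    (u : ℝ × ℝ → ℂ) (hu : ContDiff ℝ 2 u)
    (v : ℝ × ℝ → ℂ) (hv : ∀ x t : ℝ, v (x, t) = u (-x, t)) :
    (∀ x t : ℝ,
      I * dt u x t + dxx u x t +
        2 * (σ : ℂ) * ((‖u (x, t)‖ ^ 2 + ‖u (-x, t)‖ ^ 2 : ℝ) : ℂ)
          * u (x, t) = 0)
    ↔
    (∀ x t : ℝ,
      I * dt u x t + dxx u x t +
        2 * (σ : ℂ) * ((‖u (x, t)‖ ^ 2 + ‖v (x, t)‖ ^ 2 : ℝ) : ℂ)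
          * u (x, t) = 0
      ∧
      I * dt v x t + dxx v x t +
        2 * (σ : ℂ) * ((‖u (x, t)‖ ^ 2 + ‖v (x, t)‖ ^ 2 : ℝ) : ℂ)
          * v (x, t) = 0) := by
  constructor
  · intro h x t
    constructor
    · rw [hv x t]; exact h x t
    · rw [hv x t, dt_refl u v hv, dxx_refl u v hv]
      have := h (-x) t
      rw [neg_neg] at this
      rw [add_comm (‖u (x, t)‖ ^ 2)]
      exact this
  · intro h x t
    have := (h x t).1
    rw [hv x t] at this
    exact this
end

section
/- Let σ ∈ {1,−1} and let u : ℝ × ℝ → ℂ be twice continuously differentiable, and define v : ℝ × ℝ → ℂ by v(x,t) = conj(u(x,−t)). Then u satisfies the reverse-time nonlocal NLS equation i·uₜ(x,t) + uₓₓ(x,t) + 2σ[|u(x,t)|² + |u(x,−t)|²]u(x,t) = 0 for all (x,t) ∈ ℝ² if and only if the pair (u,v) satisfies the Manakov system for all (x,t) ∈ ℝ². -/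
open Complex

private lemma conj_hasDerivAt {f : ℝ → ℂ} {f' : ℂ} {t : ℝ} (hf : HasDerivAt f f' t) :
    HasDerivAt (fun s => (starRingEnd ℂ) (f s)) ((starRingEnd ℂ) f') t := by
  have h := (Complex.conjCLE.toContinuousLinearMap.hasFDerivAt (x := f t)).comp_hasDerivAt t hf
  simpa [Function.comp_def] using h

theorem reverse_time_nonlocal_NLS_iff_Manakov
    (σ : ℝ) (hσ : σ = 1 ∨ σ = -1)
    (u : ℝ × ℝ → ℂ) (hu : ContDiff ℝ 2 u)
    (v : ℝ × ℝ → ℂ) (hv : ∀ x t : ℝ, v (x, t) = (starRingEnd ℂ) (u (x, -t))) :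
    (∀ x t : ℝ,
      I * dt u x t + dxx u x t +
        2 * (σ : ℂ) * ((‖u (x, t)‖ ^ 2 + ‖u (x, -t)‖ ^ 2 : ℝ) : ℂ)
          * u (x, t) = 0)
    ↔
    (∀ x t : ℝ,
      I * dt u x t + dxx u x t +
        2 * (σ : ℂ) * ((‖u (x, t)‖ ^ 2 + ‖v (x, t)‖ ^ 2 : ℝ) : ℂ)
          * u (x, t) = 0
      ∧
      I * dt v x t + dxx v x t +
        2 * (σ : ℂ) * ((‖u (x, t)‖ ^ 2 + ‖v (x, t)‖ ^ 2 : ℝ) : ℂ)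
          * v (x, t) = 0) := by
  have hud : Differentiable ℝ u := hu.differentiable (by norm_num)
  -- spatial partial derivative
  have hpx : ∀ x t : ℝ, HasDerivAt (fun y => u (y, t)) (fderiv ℝ u (x, t) (1, 0)) x := by
    intro x t
    exact (hud (x, t)).hasFDerivAt.comp_hasDerivAt x
      ((hasDerivAt_id x).prodMk (hasDerivAt_const x t))
  have hderiv_x : ∀ t : ℝ, deriv (fun y => u (y, t)) = fun y => fderiv ℝ u (y, t) (1, 0) := by
    intro t; funext y; exact (hpx y t).deriv
  -- time partial derivative
  have hpt : ∀ x t : ℝ, HasDerivAt (fun τ => u (x, τ)) (fderiv ℝ u (x, t) (0, 1)) t := by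
    intro x t
    exact (hud (x, t)).hasFDerivAt.comp_hasDerivAt t
      ((hasDerivAt_const t x).prodMk (hasDerivAt_id t))
  -- the spatial derivative function is differentiable (u is C²)
  have hgC : ContDiff ℝ 1 (fderiv ℝ u) := hu.fderiv_right (by norm_num)
  have hgd : ∀ t : ℝ, Differentiable ℝ (fun y : ℝ => fderiv ℝ u (y, t) (1, 0)) := by
    intro t
    have h1 : Differentiable ℝ (fun y : ℝ => fderiv ℝ u (y, t)) :=
      (hgC.differentiable (by norm_num)).comp (differentiable_id.prodMk (differentiable_const t))
    exact h1.clm_apply (differentiable_const _)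
  have hdxxu : ∀ x t : ℝ, dxx u x t = deriv (fun y => fderiv ℝ u (y, t) (1, 0)) x := by
    intro x t; unfold dxx; rw [hderiv_x t]
  have hdtu : ∀ x t : ℝ, dt u x t = fderiv ℝ u (x, t) (0, 1) := by
    intro x t; exact (hpt x t).deriv
  -- derivatives of v
  have hvt : ∀ x t : ℝ, (fun τ : ℝ => v (x, τ)) = fun τ => (starRingEnd ℂ) (u (x, -τ)) := by
    intro x t; funext τ; exact hv x τ
  have hdtv : ∀ x t : ℝ, dt v x t = -(starRingEnd ℂ) (dt u x (-t)) := by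
    intro x t
    have hA : HasDerivAt (fun τ : ℝ => u (x, -τ))
        ((-1 : ℝ) • fderiv ℝ u (x, -t) (0, 1)) t := by
      have := (hpt x (-t)).scomp t (hasDerivAt_neg t)
      simpa [Function.comp_def] using this
    have hB := conj_hasDerivAt hA
    unfold dt
    rw [hvt x t, hB.deriv, (hpt x (-t)).deriv]
    simp
  have hdxxv : ∀ x t : ℝ, dxx v x t = (starRingEnd ℂ) (dxx u x (-t)) := by
    intro x t
    have h1 : deriv (fun y => v (y, t)) = fun y => (starRingEnd ℂ) (fderiv ℝ u (y, -t) (1, 0)) := by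
      funext y
      have : (fun y : ℝ => v (y, t)) = fun y => (starRingEnd ℂ) (u (y, -t)) := by
        funext z; exact hv z t
      rw [this]
      exact (conj_hasDerivAt (hpx y (-t))).deriv
    unfold dxx
    rw [h1, hderiv_x (-t)]
    exact (conj_hasDerivAt ((hgd (-t) x).hasDerivAt)).deriv
  have habsv : ∀ x t : ℝ, ‖v (x, t)‖ = ‖u (x, -t)‖ := by
    intro x t; rw [hv x t, Complex.norm_conj]
  constructor
  · intro h x t
    constructor
    · rw [habsv]; exact h x t
    · have h0 := h x (-t)
      simp only [neg_neg] at h0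
      have h1 := congrArg (starRingEnd ℂ) h0
      simp only [map_add, map_mul, Complex.conj_I, Complex.conj_ofReal, map_zero, map_neg,
        map_ofNat] at h1
      rw [hdtv, hdxxv, hv x t]
      rw [Complex.norm_conj]
      push_cast at h1 ⊢
      linear_combination h1
  · intro h x t
    have h1 := (h x t).1
    rw [habsv] at h1
    exact h1
end

section
/- Let σ ∈ {1,−1} and let u : ℝ × ℝ → ℂ be twice continuously differentiable, and define v : ℝ × ℝ → ℂ by v(x,t) = conj(u(−x,−t)). Then u satisfies the reverse-space-time nonlocal NLS equation i·uₜ(x,t) + uₓₓ(x,t) + 2σ[|u(x,t)|² + |u(−x,−t)|²]u(x,t) = 0 for all (x,t) ∈ ℝ² if and only if the pair (u,v) satisfies the Manakov system for all (x,t) ∈ ℝ². -/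
open Complex

lemma aux_dt_reflect (u : ℝ × ℝ → ℂ) (hu : ContDiff ℝ 2 u) (x t : ℝ) :
    deriv (fun τ : ℝ => (starRingEnd ℂ) (u (-x, -τ))) t
      = -(starRingEnd ℂ) (dt u (-x) (-t)) := by
  have hdiff : DifferentiableAt ℝ (fun τ : ℝ => u (-x, τ)) (-t) :=
    ((hu.differentiable (by norm_num)).comp
      ((differentiable_const (-x : ℝ)).prodMk differentiable_id)).differentiableAt
  have h1 : HasDerivAt (fun τ : ℝ => u (-x, τ)) (dt u (-x) (-t)) (-t) :=
    hdiff.hasDerivAt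
  have h2' := HasDerivAt.scomp_of_eq (hg := h1) (hh := hasDerivAt_neg t) (hy := rfl)
  have h2 : HasDerivAt (fun τ : ℝ => u (-x, -τ)) ((-1 : ℝ) • dt u (-x) (-t)) t := by
    simpa [Function.comp_def] using h2'
  have h3 := h2.star
  simpa using h3.deriv

lemma aux_dxx_reflect (u : ℝ × ℝ → ℂ) (hu : ContDiff ℝ 2 u) (x t : ℝ) :
    dxx (fun p : ℝ × ℝ => (starRingEnd ℂ) (u (-p.1, -p.2))) x t
      = (starRingEnd ℂ) (dxx u (-x) (-t)) := by
  set f : ℝ → ℂ := fun y => u (y, -t) with hf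
  have hf2 : ContDiff ℝ 2 f :=
    hu.comp (contDiff_id.prodMk contDiff_const)
  have hg1 : ContDiff ℝ 1 (deriv f) := by
    have : ContDiff ℝ (1 + 1) f := by exact_mod_cast hf2
    exact (contDiff_succ_iff_deriv.mp this).2.2
  -- first derivative of the reflected-conjugated function
  have hfirst : ∀ y : ℝ, HasDerivAt (fun z : ℝ => (starRingEnd ℂ) (u (-z, -t)))
      (-(starRingEnd ℂ) (deriv f (-y))) y := by
    intro y
    have h1 : HasDerivAt f (deriv f (-y)) (-y) :=
      ((hf2.differentiable (by norm_num)) (-y)).hasDerivAt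
    have h2' := HasDerivAt.scomp_of_eq (hg := h1) (hh := hasDerivAt_neg y) (hy := rfl)
    have h2 : HasDerivAt (fun z : ℝ => f (-z)) ((-1 : ℝ) • deriv f (-y)) y := by
      simpa [Function.comp_def] using h2'
    have h3 := h2.star
    simpa using h3
  have hD : deriv (fun z : ℝ => (starRingEnd ℂ) (u (-z, -t)))
      = fun y : ℝ => -(starRingEnd ℂ) (deriv f (-y)) :=
    funext fun y => (hfirst y).deriv
  have hsecond : HasDerivAt (fun y : ℝ => -(starRingEnd ℂ) (deriv f (-y)))
      ((starRingEnd ℂ) (deriv (deriv f) (-x))) x := by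
    have h1 : HasDerivAt (deriv f) (deriv (deriv f) (-x)) (-x) :=
      ((hg1.differentiable (by norm_num)) (-x)).hasDerivAt
    have h2' := HasDerivAt.scomp_of_eq (hg := h1) (hh := hasDerivAt_neg x) (hy := rfl)
    have h2 : HasDerivAt (fun z : ℝ => deriv f (-z)) ((-1 : ℝ) • deriv (deriv f) (-x)) x := by
      simpa [Function.comp_def] using h2'
    have h3 := (h2.star).neg
    simpa [Pi.neg_def] using h3
  show deriv (deriv (fun y : ℝ => (starRingEnd ℂ) (u (-y, -t)))) x = _
  rw [hD]
  exact hsecond.deriv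

theorem reverse_space_time_nonlocal_NLS_iff_Manakov
    (σ : ℝ) (hσ : σ = 1 ∨ σ = -1)
    (u : ℝ × ℝ → ℂ) (hu : ContDiff ℝ 2 u)
    (v : ℝ × ℝ → ℂ) (hv : ∀ x t : ℝ, v (x, t) = (starRingEnd ℂ) (u (-x, -t))) :
    (∀ x t : ℝ,
      I * dt u x t + dxx u x t +
        2 * (σ : ℂ) * ((‖u (x, t)‖ ^ 2 + ‖u (-x, -t)‖ ^ 2 : ℝ) : ℂ)
          * u (x, t) = 0)
    ↔
    (∀ x t : ℝ,
      I * dt u x t + dxx u x t +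
        2 * (σ : ℂ) * ((‖u (x, t)‖ ^ 2 + ‖v (x, t)‖ ^ 2 : ℝ) : ℂ)
          * u (x, t) = 0
      ∧
      I * dt v x t + dxx v x t +
        2 * (σ : ℂ) * ((‖u (x, t)‖ ^ 2 + ‖v (x, t)‖ ^ 2 : ℝ) : ℂ)
          * v (x, t) = 0) := by
  have habs : ∀ x t : ℝ, ‖v (x, t)‖ = ‖u (-x, -t)‖ := by
    intro x t; rw [hv x t]; exact Complex.norm_conj _
  have hdtv : ∀ x t : ℝ, dt v x t = -(starRingEnd ℂ) (dt u (-x) (-t)) := by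
    intro x t
    have : (fun τ : ℝ => v (x, τ)) = fun τ : ℝ => (starRingEnd ℂ) (u (-x, -τ)) :=
      funext fun τ => hv x τ
    rw [dt, this]
    exact aux_dt_reflect u hu x t
  have hdxxv : ∀ x t : ℝ, dxx v x t = (starRingEnd ℂ) (dxx u (-x) (-t)) := by
    intro x t
    have : (fun y : ℝ => v (y, t)) = fun y : ℝ => (starRingEnd ℂ) (u (-y, -t)) :=
      funext fun y => hv y t
    rw [dxx, this]
    exact aux_dxx_reflect u hu x t
  constructor
  · intro h x t
    refine ⟨by rw [habs x t]; exact h x t, ?_⟩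
    have hE := h (-x) (-t)
    simp only [neg_neg] at hE
    have hC := congrArg (starRingEnd ℂ) hE
    simp only [map_add, map_mul, map_zero, Complex.conj_I, Complex.conj_ofReal,
      map_ofNat] at hC
    rw [hdtv x t, hdxxv x t, hv x t, Complex.norm_conj]
    push_cast at hC ⊢
    ring_nf
    ring_nf at hC
    linear_combination hC
  · intro h x t
    have := (h x t).1
    rwa [habs x t] at this
end

section
/- Let σ ∈ {1,−1} and let u, v : ℝ × ℝ → ℂ be twice continuously differentiable, and define w(x,t) = u(−x,t) and s(x,t) = v(−x,t). Then (u,v,w,s) satisfies the four-component coupled NLS system for all (x,t) ∈ ℝ² if and only if (u,v) satisfies the reverse-space nonlocal Manakov system: i·uₜ(x,t) + uₓₓ(x,t) + 2σ[|u(x,t)|²+|u(−x,t)|²+|v(x,t)|²+|v(−x,t)|²]u(x,t) = 0 and i·vₜ(x,t) + vₓₓ(x,t) + 2σ[|u(x,t)|²+|u(−x,t)|²+|v(x,t)|²+|v(−x,t)|²]v(x,t) = 0 for all (x,t) ∈ ℝ². -/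
open Complex

lemma deriv2_comp_neg (g : ℝ → ℂ) (x : ℝ) :
    deriv (deriv (fun y : ℝ => g (-y))) x = deriv (deriv g) (-x) := by
  have h1 : deriv (fun y : ℝ => g (-y)) = fun y : ℝ => -deriv g (-y) := by
    funext y; exact deriv_comp_neg g y
  rw [h1]
  have h2 : deriv (fun y : ℝ => -deriv g (-y)) x = -deriv (fun y : ℝ => deriv g (-y)) x :=
    deriv.neg
  rw [h2, deriv_comp_neg (deriv g) x, neg_neg]

lemma dt_neg (u w : ℝ × ℝ → ℂ) (hw : ∀ x t : ℝ, w (x, t) = u (-x, t)) (x t : ℝ) :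
    dt w x t = dt u (-x) t := by
  unfold dt
  congr 1
  funext τ
  exact hw x τ

lemma dxx_neg (u w : ℝ × ℝ → ℂ) (hw : ∀ x t : ℝ, w (x, t) = u (-x, t)) (x t : ℝ) :
    dxx w x t = dxx u (-x) t := by
  unfold dxx
  have : (fun y : ℝ => w (y, t)) = fun y : ℝ => (fun z : ℝ => u (z, t)) (-y) := by
    funext y; exact hw y t
  rw [this, deriv2_comp_neg (fun z : ℝ => u (z, t)) x]

theorem four_component_iff_reverse_space_nonlocal_Manakov
    (σ : ℝ) (hσ : σ = 1 ∨ σ = -1)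
    (u v : ℝ × ℝ → ℂ) (hu : ContDiff ℝ 2 u) (hvC : ContDiff ℝ 2 v)
    (w s : ℝ × ℝ → ℂ)
    (hw : ∀ x t : ℝ, w (x, t) = u (-x, t))
    (hs : ∀ x t : ℝ, s (x, t) = v (-x, t)) :
    (∀ x t : ℝ,
      (I * dt u x t + dxx u x t +
        2 * (σ : ℂ) * ((‖u (x, t)‖ ^ 2 + ‖v (x, t)‖ ^ 2
          + ‖w (x, t)‖ ^ 2 + ‖s (x, t)‖ ^ 2 : ℝ) : ℂ) * u (x, t) = 0)
      ∧
      (I * dt v x t + dxx v x t +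
        2 * (σ : ℂ) * ((‖u (x, t)‖ ^ 2 + ‖v (x, t)‖ ^ 2
          + ‖w (x, t)‖ ^ 2 + ‖s (x, t)‖ ^ 2 : ℝ) : ℂ) * v (x, t) = 0)
      ∧
      (I * dt w x t + dxx w x t +
        2 * (σ : ℂ) * ((‖u (x, t)‖ ^ 2 + ‖v (x, t)‖ ^ 2
          + ‖w (x, t)‖ ^ 2 + ‖s (x, t)‖ ^ 2 : ℝ) : ℂ) * w (x, t) = 0)
      ∧
      (I * dt s x t + dxx s x t +
        2 * (σ : ℂ) * ((‖u (x, t)‖ ^ 2 + ‖v (x, t)‖ ^ 2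
          + ‖w (x, t)‖ ^ 2 + ‖s (x, t)‖ ^ 2 : ℝ) : ℂ) * s (x, t) = 0))
    ↔
    (∀ x t : ℝ,
      (I * dt u x t + dxx u x t +
        2 * (σ : ℂ) * ((‖u (x, t)‖ ^ 2 + ‖u (-x, t)‖ ^ 2
          + ‖v (x, t)‖ ^ 2 + ‖v (-x, t)‖ ^ 2 : ℝ) : ℂ) * u (x, t) = 0)
      ∧
      (I * dt v x t + dxx v x t +
        2 * (σ : ℂ) * ((‖u (x, t)‖ ^ 2 + ‖u (-x, t)‖ ^ 2
          + ‖v (x, t)‖ ^ 2 + ‖v (-x, t)‖ ^ 2 : ℝ) : ℂ) * v (x, t) = 0)) := by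
  constructor
  · intro h x t
    have h1 := (h x t).1
    have h2 := (h x t).2.1
    simp only [hw, hs] at h1 h2
    constructor
    · push_cast at h1 ⊢; linear_combination h1
    · push_cast at h2 ⊢; linear_combination h2
  · intro h x t
    have h1 := (h x t).1
    have h2 := (h x t).2
    have h3 := (h (-x) t).1
    have h4 := (h (-x) t).2
    rw [neg_neg] at h3 h4
    simp only [hw, hs, dt_neg u w hw, dxx_neg u w hw, dt_neg v s hs, dxx_neg v s hs]
    refine ⟨?_, ?_, ?_, ?_⟩ <;> push_cast at h1 h2 h3 h4 ⊢
    · linear_combination h1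
    · linear_combination h2
    · linear_combination h3
    · linear_combination h4
end

section
/- Let σ ∈ {1,−1} and let u, v : ℝ × ℝ → ℂ be twice continuously differentiable, and define w(x,t) = conj(u(x,−t)) and s(x,t) = conj(v(x,−t)). Then (u,v,w,s) satisfies the four-component coupled NLS system for all (x,t) ∈ ℝ² if and only if (u,v) satisfies the reverse-time nonlocal Manakov system: i·uₜ(x,t) + uₓₓ(x,t) + 2σ[|u(x,t)|²+|u(x,−t)|²+|v(x,t)|²+|v(x,−t)|²]u(x,t) = 0 and i·vₜ(x,t) + vₓₓ(x,t) + 2σ[|u(x,t)|²+|u(x,−t)|²+|v(x,t)|²+|v(x,−t)|²]v(x,t) = 0 for all (x,t) ∈ ℝ². -/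
open Complex

lemma deriv_conj' (f : ℝ → ℂ) (x : ℝ) :
    deriv (fun y => (starRingEnd ℂ) (f y)) x = (starRingEnd ℂ) (deriv f x) := by
  by_cases h : DifferentiableAt ℝ f x
  · have := (Complex.conjCLE.hasFDerivAt.comp_hasDerivAt x h.hasDerivAt)
    simpa [Function.comp_def, Complex.conjCAE_apply] using this.deriv
  · have h2 : ¬ DifferentiableAt ℝ (fun y => (starRingEnd ℂ) (f y)) x := by
      intro h2
      have h3 := Complex.conjCLE.differentiableAt.comp x h2
      have : (⇑Complex.conjCLE ∘ fun y => (starRingEnd ℂ) (f y)) = f := by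
        funext y; simp [Function.comp, Complex.conjCLE_apply]
      rw [this] at h3
      exact h h3
    rw [deriv_zero_of_not_differentiableAt h, deriv_zero_of_not_differentiableAt h2, map_zero]

lemma dt_conj_neg (u : ℝ × ℝ → ℂ) (w : ℝ × ℝ → ℂ)
    (hw : ∀ x t : ℝ, w (x, t) = (starRingEnd ℂ) (u (x, -t))) (x t : ℝ) :
    dt w x t = -(starRingEnd ℂ) (dt u x (-t)) := by
  have h1 : (fun τ : ℝ => w (x, τ)) = fun τ : ℝ => (starRingEnd ℂ) (u (x, -τ)) := by
    funext τ; exact hw x τ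
  unfold dt
  rw [h1, deriv_conj' (fun τ : ℝ => u (x, -τ)) t,
    deriv_comp_neg (f := fun τ : ℝ => u (x, τ)), map_neg]

lemma dxx_conj_neg (u : ℝ × ℝ → ℂ) (w : ℝ × ℝ → ℂ)
    (hw : ∀ x t : ℝ, w (x, t) = (starRingEnd ℂ) (u (x, -t))) (x t : ℝ) :
    dxx w x t = (starRingEnd ℂ) (dxx u x (-t)) := by
  have h1 : (fun y : ℝ => w (y, t)) = fun y : ℝ => (starRingEnd ℂ) (u (y, -t)) := by
    funext y; exact hw y t
  have h2 : deriv (fun y : ℝ => (starRingEnd ℂ) (u (y, -t)))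
      = fun y : ℝ => (starRingEnd ℂ) (deriv (fun y' : ℝ => u (y', -t)) y) := by
    funext y; exact deriv_conj' (fun y' : ℝ => u (y', -t)) y
  unfold dxx
  rw [h1, h2, deriv_conj' (deriv (fun y' : ℝ => u (y', -t))) x]

theorem four_component_iff_reverse_time_nonlocal_Manakov
    (σ : ℝ) (hσ : σ = 1 ∨ σ = -1)
    (u v : ℝ × ℝ → ℂ) (hu : ContDiff ℝ 2 u) (hvC : ContDiff ℝ 2 v)
    (w s : ℝ × ℝ → ℂ)
    (hw : ∀ x t : ℝ, w (x, t) = (starRingEnd ℂ) (u (x, -t)))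
    (hs : ∀ x t : ℝ, s (x, t) = (starRingEnd ℂ) (v (x, -t))) :
    (∀ x t : ℝ,
      (I * dt u x t + dxx u x t +
        2 * (σ : ℂ) * ((‖u (x, t)‖ ^ 2 + ‖v (x, t)‖ ^ 2
          + ‖w (x, t)‖ ^ 2 + ‖s (x, t)‖ ^ 2 : ℝ) : ℂ) * u (x, t) = 0)
      ∧
      (I * dt v x t + dxx v x t +
        2 * (σ : ℂ) * ((‖u (x, t)‖ ^ 2 + ‖v (x, t)‖ ^ 2
          + ‖w (x, t)‖ ^ 2 + ‖s (x, t)‖ ^ 2 : ℝ) : ℂ) * v (x, t) = 0)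
      ∧
      (I * dt w x t + dxx w x t +
        2 * (σ : ℂ) * ((‖u (x, t)‖ ^ 2 + ‖v (x, t)‖ ^ 2
          + ‖w (x, t)‖ ^ 2 + ‖s (x, t)‖ ^ 2 : ℝ) : ℂ) * w (x, t) = 0)
      ∧
      (I * dt s x t + dxx s x t +
        2 * (σ : ℂ) * ((‖u (x, t)‖ ^ 2 + ‖v (x, t)‖ ^ 2
          + ‖w (x, t)‖ ^ 2 + ‖s (x, t)‖ ^ 2 : ℝ) : ℂ) * s (x, t) = 0))
    ↔
    (∀ x t : ℝ,
      (I * dt u x t + dxx u x t +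
        2 * (σ : ℂ) * ((‖u (x, t)‖ ^ 2 + ‖u (x, -t)‖ ^ 2
          + ‖v (x, t)‖ ^ 2 + ‖v (x, -t)‖ ^ 2 : ℝ) : ℂ) * u (x, t) = 0)
      ∧
      (I * dt v x t + dxx v x t +
        2 * (σ : ℂ) * ((‖u (x, t)‖ ^ 2 + ‖u (x, -t)‖ ^ 2
          + ‖v (x, t)‖ ^ 2 + ‖v (x, -t)‖ ^ 2 : ℝ) : ℂ) * v (x, t) = 0)) := by
  constructor
  · intro H x t
    obtain ⟨h1, h2, -, -⟩ := H x t
    simp only [hw, hs, Complex.norm_conj] at h1 h2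
    push_cast at h1 h2 ⊢
    constructor
    · linear_combination h1
    · linear_combination h2
  · intro H x t
    refine ⟨?_, ?_, ?_, ?_⟩
    · have h1 := (H x t).1
      simp only [hw, hs, Complex.norm_conj]
      push_cast at h1 ⊢
      linear_combination h1
    · have h2 := (H x t).2
      simp only [hw, hs, Complex.norm_conj]
      push_cast at h2 ⊢
      linear_combination h2
    · have h1 := congrArg (starRingEnd ℂ) (H x (-t)).1
      simp only [map_add, map_mul, map_zero, map_ofNat, conj_I, Complex.conj_ofReal,
        neg_neg] at h1
      rw [dt_conj_neg u w hw x t, dxx_conj_neg u w hw x t, hw x t]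
      simp only [hw, hs, Complex.norm_conj]
      push_cast at h1 ⊢
      linear_combination h1
    · have h2 := congrArg (starRingEnd ℂ) (H x (-t)).2
      simp only [map_add, map_mul, map_zero, map_ofNat, conj_I, Complex.conj_ofReal,
        neg_neg] at h2
      rw [dt_conj_neg v s hs x t, dxx_conj_neg v s hs x t, hs x t]
      simp only [hw, hs, Complex.norm_conj]
      push_cast at h2 ⊢
      linear_combination h2
end

section
/- Let σ ∈ {1,−1} and let u, v : ℝ × ℝ → ℂ be twice continuously differentiable, and define w(x,t) = conj(u(−x,−t)) and s(x,t) = conj(v(−x,−t)). Then (u,v,w,s) satisfies the four-component coupled NLS system for all (x,t) ∈ ℝ² if and only if (u,v) satisfies the reverse-space-time nonlocal Manakov system: i·uₜ(x,t) + uₓₓ(x,t) + 2σ[|u(x,t)|²+|u(−x,−t)|²+|v(x,t)|²+|v(−x,−t)|²]u(x,t) = 0 and i·vₜ(x,t) + vₓₓ(x,t) + 2σ[|u(x,t)|²+|u(−x,−t)|²+|v(x,t)|²+|v(−x,−t)|²]v(x,t) = 0 for all (x,t) ∈ ℝ². -/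
open Complex

lemma dt_conj_flip (u w : ℝ × ℝ → ℂ)
    (hw : ∀ x t : ℝ, w (x, t) = (starRingEnd ℂ) (u (-x, -t))) (x t : ℝ) :
    dt w x t = -(starRingEnd ℂ) (dt u (-x) (-t)) := by
  unfold dt
  have h1 : (fun τ : ℝ => w (x, τ)) = fun τ => (starRingEnd ℂ) (u (-x, -τ)) :=
    funext fun τ => hw x τ
  rw [h1, deriv_conj' (fun τ => u (-x, -τ)), deriv_comp_neg (fun τ => u (-x, τ)), map_neg]

lemma dxx_conj_flip (u w : ℝ × ℝ → ℂ)
    (hw : ∀ x t : ℝ, w (x, t) = (starRingEnd ℂ) (u (-x, -t))) (x t : ℝ) :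
    dxx w x t = (starRingEnd ℂ) (dxx u (-x) (-t)) := by
  unfold dxx
  have h1 : (fun y : ℝ => w (y, t)) = fun y => (starRingEnd ℂ) (u (-y, -t)) :=
    funext fun y => hw y t
  rw [h1]
  have h2 : deriv (fun y : ℝ => (starRingEnd ℂ) (u (-y, -t)))
      = fun y => -(starRingEnd ℂ) (deriv (fun z : ℝ => u (z, -t)) (-y)) := by
    funext y
    rw [deriv_conj' (fun y => u (-y, -t)), deriv_comp_neg (fun z => u (z, -t)), map_neg]
  rw [h2, deriv.fun_neg, deriv_conj' (fun y => deriv (fun z : ℝ => u (z, -t)) (-y)),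
    deriv_comp_neg (deriv (fun z : ℝ => u (z, -t))), map_neg, neg_neg]

theorem four_component_iff_reverse_space_time_nonlocal_Manakov
    (σ : ℝ) (hσ : σ = 1 ∨ σ = -1)
    (u v : ℝ × ℝ → ℂ) (hu : ContDiff ℝ 2 u) (hvC : ContDiff ℝ 2 v)
    (w s : ℝ × ℝ → ℂ)
    (hw : ∀ x t : ℝ, w (x, t) = (starRingEnd ℂ) (u (-x, -t)))
    (hs : ∀ x t : ℝ, s (x, t) = (starRingEnd ℂ) (v (-x, -t))) :
    (∀ x t : ℝ,
      (I * dt u x t + dxx u x t +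
        2 * (σ : ℂ) * ((‖u (x, t)‖ ^ 2 + ‖v (x, t)‖ ^ 2
          + ‖w (x, t)‖ ^ 2 + ‖s (x, t)‖ ^ 2 : ℝ) : ℂ) * u (x, t) = 0)
      ∧
      (I * dt v x t + dxx v x t +
        2 * (σ : ℂ) * ((‖u (x, t)‖ ^ 2 + ‖v (x, t)‖ ^ 2
          + ‖w (x, t)‖ ^ 2 + ‖s (x, t)‖ ^ 2 : ℝ) : ℂ) * v (x, t) = 0)
      ∧
      (I * dt w x t + dxx w x t +
        2 * (σ : ℂ) * ((‖u (x, t)‖ ^ 2 + ‖v (x, t)‖ ^ 2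
          + ‖w (x, t)‖ ^ 2 + ‖s (x, t)‖ ^ 2 : ℝ) : ℂ) * w (x, t) = 0)
      ∧
      (I * dt s x t + dxx s x t +
        2 * (σ : ℂ) * ((‖u (x, t)‖ ^ 2 + ‖v (x, t)‖ ^ 2
          + ‖w (x, t)‖ ^ 2 + ‖s (x, t)‖ ^ 2 : ℝ) : ℂ) * s (x, t) = 0))
    ↔
    (∀ x t : ℝ,
      (I * dt u x t + dxx u x t +
        2 * (σ : ℂ) * ((‖u (x, t)‖ ^ 2 + ‖u (-x, -t)‖ ^ 2
          + ‖v (x, t)‖ ^ 2 + ‖v (-x, -t)‖ ^ 2 : ℝ) : ℂ) * u (x, t) = 0)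
      ∧
      (I * dt v x t + dxx v x t +
        2 * (σ : ℂ) * ((‖u (x, t)‖ ^ 2 + ‖u (-x, -t)‖ ^ 2
          + ‖v (x, t)‖ ^ 2 + ‖v (-x, -t)‖ ^ 2 : ℝ) : ℂ) * v (x, t) = 0)) := by
  -- the two nonlinearities agree
  have hN : ∀ x t : ℝ,
      (‖u (x, t)‖ ^ 2 + ‖v (x, t)‖ ^ 2
        + ‖w (x, t)‖ ^ 2 + ‖s (x, t)‖ ^ 2 : ℝ)
      = (‖u (x, t)‖ ^ 2 + ‖u (-x, -t)‖ ^ 2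
        + ‖v (x, t)‖ ^ 2 + ‖v (-x, -t)‖ ^ 2 : ℝ) := by
    intro x t
    rw [hw, hs, Complex.norm_conj, Complex.norm_conj]
    ring
  constructor
  · intro h x t
    obtain ⟨h1, h2, -, -⟩ := h x t
    rw [hN x t] at h1 h2
    exact ⟨h1, h2⟩
  · intro h x t
    refine ⟨?_, ?_, ?_, ?_⟩
    · rw [hN x t]; exact (h x t).1
    · rw [hN x t]; exact (h x t).2
    · -- w equation: conjugate of the u equation at (-x, -t)
      have h1 := (h (-x) (-t)).1
      rw [dt_conj_flip u w hw x t, dxx_conj_flip u w hw x t, hN x t]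
      have hc := congrArg (starRingEnd ℂ) h1
      rw [map_zero] at hc
      rw [hw x t]
      calc I * -(starRingEnd ℂ) (dt u (-x) (-t)) + (starRingEnd ℂ) (dxx u (-x) (-t)) +
            2 * (σ : ℂ) * ((‖u (x, t)‖ ^ 2 + ‖u (-x, -t)‖ ^ 2
              + ‖v (x, t)‖ ^ 2 + ‖v (-x, -t)‖ ^ 2 : ℝ) : ℂ)
              * (starRingEnd ℂ) (u (-x, -t))
          = (starRingEnd ℂ) (I * dt u (-x) (-t) + dxx u (-x) (-t) +
            2 * (σ : ℂ) * ((‖u (-x, -t)‖ ^ 2 + ‖u (-(-x), -(-t))‖ ^ 2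
              + ‖v (-x, -t)‖ ^ 2 + ‖v (-(-x), -(-t))‖ ^ 2 : ℝ) : ℂ)
              * u (-x, -t)) := by
            simp only [map_add, map_mul, Complex.conj_I, Complex.conj_ofReal, map_ofNat,
              neg_neg]
            push_cast
            ring
        _ = 0 := hc
    · -- s equation: conjugate of the v equation at (-x, -t)
      have h1 := (h (-x) (-t)).2
      rw [dt_conj_flip v s hs x t, dxx_conj_flip v s hs x t, hN x t]
      have hc := congrArg (starRingEnd ℂ) h1
      rw [map_zero] at hc
      rw [hs x t]
      calc I * -(starRingEnd ℂ) (dt v (-x) (-t)) + (starRingEnd ℂ) (dxx v (-x) (-t)) +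
            2 * (σ : ℂ) * ((‖u (x, t)‖ ^ 2 + ‖u (-x, -t)‖ ^ 2
              + ‖v (x, t)‖ ^ 2 + ‖v (-x, -t)‖ ^ 2 : ℝ) : ℂ)
              * (starRingEnd ℂ) (v (-x, -t))
          = (starRingEnd ℂ) (I * dt v (-x) (-t) + dxx v (-x) (-t) +
            2 * (σ : ℂ) * ((‖u (-x, -t)‖ ^ 2 + ‖u (-(-x), -(-t))‖ ^ 2
              + ‖v (-x, -t)‖ ^ 2 + ‖v (-(-x), -(-t))‖ ^ 2 : ℝ) : ℂ)
              * v (-x, -t)) := by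
            simp only [map_add, map_mul, Complex.conj_I, Complex.conj_ofReal, map_ofNat,
              neg_neg]
            push_cast
            ring
        _ = 0 := hc
end

section
/- Let η > 0 and α₁, β₁ ∈ ℂ with (α₁, β₁) ≠ (0,0). Define u(x,t) = 4η·α₁·e^{4iη²t}/(e^{−2ηx} + (|α₁|²+|β₁|²)e^{2ηx}) and v(x,t) = 4η·β₁·e^{4iη²t}/(e^{−2ηx} + (|α₁|²+|β₁|²)e^{2ηx}). Then v(x,t) = u(−x,t) for all (x,t) ∈ ℝ² if and only if α₁ = β₁ and |α₁|² = 1/2 (equivalently, α₁ = β₁ = 2^{−1/2}e^{iγ} for some real γ). -/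
open Complex

theorem one_soliton_parity_reduction
    (η : ℝ) (hη : 0 < η) (α₁ β₁ : ℂ) (hαβ : ¬(α₁ = 0 ∧ β₁ = 0))
    (u v : ℝ × ℝ → ℂ)
    (hu : ∀ x t : ℝ, u (x, t) =
      4 * (η : ℂ) * α₁ * Complex.exp (4 * I * (η : ℂ) ^ 2 * (t : ℂ)) /
        ((Real.exp (-(2 * η * x)) +
          (‖α₁‖ ^ 2 + ‖β₁‖ ^ 2) * Real.exp (2 * η * x) : ℝ) : ℂ))
    (hv : ∀ x t : ℝ, v (x, t) =
      4 * (η : ℂ) * β₁ * Complex.exp (4 * I * (η : ℂ) ^ 2 * (t : ℂ)) /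
        ((Real.exp (-(2 * η * x)) +
          (‖α₁‖ ^ 2 + ‖β₁‖ ^ 2) * Real.exp (2 * η * x) : ℝ) : ℂ)) :
    (∀ x t : ℝ, v (x, t) = u (-x, t)) ↔ (α₁ = β₁ ∧ ‖α₁‖ ^ 2 = 1 / 2) := by
  set s : ℝ := ‖α₁‖ ^ 2 + ‖β₁‖ ^ 2 with hs
  have hspos : 0 < s := by
    rcases not_and_or.mp hαβ with h | h
    · have := norm_pos_iff.mpr h
      have h2 := norm_nonneg β₁
      positivity
    · have := norm_pos_iff.mpr h
      have h2 := norm_nonneg α₁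
      positivity
  have hD : ∀ x : ℝ, 0 < Real.exp (-(2*η*x)) + s * Real.exp (2*η*x) := by
    intro x; positivity
  have hDne : ∀ x : ℝ, ((Real.exp (-(2*η*x)) + s * Real.exp (2*η*x) : ℝ) : ℂ) ≠ 0 := by
    intro x
    exact_mod_cast ne_of_gt (hD x)
  constructor
  · intro h
    -- key cross-multiplied identity at t = 0
    have key : ∀ x : ℝ,
        β₁ * ((Real.exp (-(2*η*(-x))) + s * Real.exp (2*η*(-x)) : ℝ) : ℂ)
          = α₁ * ((Real.exp (-(2*η*x)) + s * Real.exp (2*η*x) : ℝ) : ℂ) := by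
      intro x
      have hx := h x 0
      rw [hv, hu] at hx
      have ht : Complex.exp (4 * I * (η : ℂ) ^ 2 * ((0:ℝ) : ℂ)) = 1 := by
        norm_num
      rw [ht, mul_one, mul_one, div_eq_div_iff (hDne x) (hDne (-x))] at hx
      have h4 : (4 : ℂ) * (η : ℂ) ≠ 0 := by
        have : (η : ℂ) ≠ 0 := by exact_mod_cast ne_of_gt hη
        simp [this]
      field_simp at hx
      apply mul_left_cancel₀ h4
      push_cast at hx ⊢
      ring_nf at hx ⊢
      linear_combination 4 * hx
    have h0 := key 0
    push_cast at h0
    simp at h0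
    have h1s : (1 : ℂ) + (s : ℂ) ≠ 0 := by
      have h' : (0:ℝ) < 1 + s := by linarith
      have : ((1 + s : ℝ) : ℂ) ≠ 0 := by exact_mod_cast ne_of_gt h'
      push_cast at this; exact this
    have hab : α₁ = β₁ := (h0.resolve_right h1s).symm
    have hane : α₁ ≠ 0 := by
      rcases not_and_or.mp hαβ with h' | h'
      · exact h'
      · rw [hab]; exact h'
    have h1 := key 1
    rw [← hab] at h1
    have h1' : ((Real.exp (-(2*η*(-1:ℝ))) + s * Real.exp (2*η*(-1:ℝ)) : ℝ) : ℂ)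
        = ((Real.exp (-(2*η*(1:ℝ))) + s * Real.exp (2*η*(1:ℝ)) : ℝ) : ℂ) :=
      mul_left_cancel₀ hane h1
    have h1r : Real.exp (-(2*η*(-1:ℝ))) + s * Real.exp (2*η*(-1:ℝ))
        = Real.exp (-(2*η*(1:ℝ))) + s * Real.exp (2*η*(1:ℝ)) := by exact_mod_cast h1'
    have hs1 : s = 1 := by
      have hne : Real.exp (2*η) - Real.exp (-(2*η)) > 0 := by
        have : -(2*η) < 2*η := by linarith
        have := Real.exp_lt_exp.mpr this
        linarith
      have : (s - 1) * (Real.exp (2*η) - Real.exp (-(2*η))) = 0 := by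
        norm_num at h1r
        ring_nf at h1r ⊢
        linarith [h1r]
      rcases mul_eq_zero.mp this with h' | h'
      · linarith
      · linarith
    refine ⟨hab, ?_⟩
    rw [hs, ← hab] at hs1
    linarith [hs1]
  · rintro ⟨hab, habs⟩
    have hs1 : s = 1 := by
      rw [hs, ← hab, habs]; norm_num
    intro x t
    rw [hv, hu, hab, hs1]
    congr 2
    ring_nf
end

section
/- Let η > 0 and define u : ℝ × ℝ → ℂ by u(x,t) = √2·η·e^{4iη²t}/cosh(2ηx). Then u satisfies the focusing reverse-space nonlocal NLS equation: i·uₜ(x,t) + uₓₓ(x,t) + 2[|u(x,t)|² + |u(−x,t)|²]u(x,t) = 0 for all (x,t) ∈ ℝ². -/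
open Complex

theorem one_soliton_solves_reverse_space_nonlocal_NLS
    (η : ℝ) (hη : 0 < η)
    (u : ℝ × ℝ → ℂ)
    (hu : ∀ x t : ℝ, u (x, t) =
      ((Real.sqrt 2 * η : ℝ) : ℂ) * Complex.exp (4 * I * (η : ℂ) ^ 2 * (t : ℂ)) /
        Complex.cosh (2 * (η : ℂ) * (x : ℂ))) :
    ∀ x t : ℝ,
      I * dt u x t + dxx u x t +
        2 * ((‖u (x, t)‖ ^ 2 + ‖u (-x, t)‖ ^ 2 : ℝ) : ℂ)
          * u (x, t) = 0 := by
  intro x t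
  set c : ℂ := ((Real.sqrt 2 * η : ℝ) : ℂ) with hc
  set k : ℂ := 2 * (η : ℂ) with hk
  set E : ℂ := Complex.exp (4 * I * (η : ℂ) ^ 2 * (t : ℂ)) with hE
  -- cosh of real argument nonzero
  have hcosh_ne : ∀ y : ℝ, Complex.cosh (k * (y : ℂ)) ≠ 0 := by
    intro y
    have : k * (y : ℂ) = ((2 * η * y : ℝ) : ℂ) := by push_cast [hk]; ring
    rw [this, ← Complex.ofReal_cosh]
    exact_mod_cast (Real.cosh_pos (x := 2 * η * y)).ne'
  -- time derivative
  have hdt : dt u x t = c * (E * (4 * I * (η : ℂ) ^ 2)) / Complex.cosh (k * (x : ℂ)) := by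
    have hfun : (fun τ : ℝ => u (x, τ)) =
        fun τ : ℝ => c * Complex.exp (4 * I * (η : ℂ) ^ 2 * (τ : ℂ)) /
          Complex.cosh (k * (x : ℂ)) := by
      funext τ; rw [hu]
    have hD : HasDerivAt (fun τ : ℝ => c * Complex.exp (4 * I * (η : ℂ) ^ 2 * (τ : ℂ)) /
        Complex.cosh (k * (x : ℂ)))
        (c * (Complex.exp (4 * I * (η : ℂ) ^ 2 * (t : ℂ)) * (4 * I * (η : ℂ) ^ 2)) /
          Complex.cosh (k * (x : ℂ))) t := by
      have h1 : HasDerivAt (fun z : ℂ => c * Complex.exp (4 * I * (η : ℂ) ^ 2 * z) /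
          Complex.cosh (k * (x : ℂ)))
          (c * (Complex.exp (4 * I * (η : ℂ) ^ 2 * (t : ℂ)) * (4 * I * (η : ℂ) ^ 2)) /
            Complex.cosh (k * (x : ℂ))) (t : ℂ) := by
        have := (((hasDerivAt_id ((t : ℝ) : ℂ)).const_mul
          (4 * I * (η : ℂ) ^ 2)).cexp.const_mul c).div_const (Complex.cosh (k * (x : ℂ)))
        simpa [mul_comm, mul_assoc, mul_left_comm] using this
      exact h1.comp_ofReal
    rw [dt, hfun, hD.deriv, hE]
  -- space derivatives
  have hcoshD : ∀ y : ℝ, HasDerivAt (fun z : ℂ => Complex.cosh (k * z))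
      (Complex.sinh (k * (y : ℂ)) * k) (y : ℂ) := by
    intro y
    simpa using ((hasDerivAt_id ((y : ℝ) : ℂ)).const_mul k).ccosh
  have hD1 : ∀ y : ℝ, HasDerivAt (fun y' : ℝ => u (y', t))
      (-(c * E) * k * Complex.sinh (k * (y : ℂ)) / Complex.cosh (k * (y : ℂ)) ^ 2) y := by
    intro y
    have hfun : (fun y' : ℝ => u (y', t)) =
        fun y' : ℝ => c * E / Complex.cosh (k * (y' : ℂ)) := by
      funext y'; rw [hu, hE, hk]
    rw [hfun]
    have h1 : HasDerivAt (fun z : ℂ => c * E / Complex.cosh (k * z))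
        (-(c * E) * k * Complex.sinh (k * (y : ℂ)) / Complex.cosh (k * (y : ℂ)) ^ 2) (y : ℂ) := by
      have := (hasDerivAt_const ((y : ℝ) : ℂ) (c * E)).div (hcoshD y) (hcosh_ne y)
      exact this.congr_deriv (by ring)
    exact h1.comp_ofReal
  have hD1' : deriv (fun y' : ℝ => u (y', t)) =
      fun y : ℝ => -(c * E) * k * Complex.sinh (k * (y : ℂ)) / Complex.cosh (k * (y : ℂ)) ^ 2 :=
    funext fun y => (hD1 y).deriv
  have hdxx : dxx u x t =
      (-(c * E) * k * (Complex.cosh (k * (x : ℂ)) * k) * Complex.cosh (k * (x : ℂ)) ^ 2 -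
        -(c * E) * k * Complex.sinh (k * (x : ℂ)) *
          (2 * Complex.cosh (k * (x : ℂ)) ^ 1 * (Complex.sinh (k * (x : ℂ)) * k))) /
        (Complex.cosh (k * (x : ℂ)) ^ 2) ^ 2 := by
    rw [dxx, hD1']
    have hnum : HasDerivAt (fun y : ℝ => -(c * E) * k * Complex.sinh (k * (y : ℂ)))
        (-(c * E) * k * (Complex.cosh (k * (x : ℂ)) * k)) x := by
      have h1 : HasDerivAt (fun z : ℂ => -(c * E) * k * Complex.sinh (k * z))
          (-(c * E) * k * (Complex.cosh (k * (x : ℂ)) * k)) (x : ℂ) := by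
        simpa [mul_assoc] using
          (((hasDerivAt_id ((x : ℝ) : ℂ)).const_mul k).csinh.const_mul (-(c * E) * k))
      exact h1.comp_ofReal
    have hden : HasDerivAt (fun y : ℝ => Complex.cosh (k * (y : ℂ)) ^ 2)
        (2 * Complex.cosh (k * (x : ℂ)) ^ 1 * (Complex.sinh (k * (x : ℂ)) * k)) x := by
      have h1 : HasDerivAt (fun z : ℂ => Complex.cosh (k * z) ^ 2)
          (2 * Complex.cosh (k * (x : ℂ)) ^ 1 * (Complex.sinh (k * (x : ℂ)) * k)) (x : ℂ) := by
        simpa using (hcoshD x).fun_pow 2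
      exact h1.comp_ofReal
    have hden_ne : Complex.cosh (k * (x : ℂ)) ^ 2 ≠ 0 := pow_ne_zero _ (hcosh_ne x)
    exact (hnum.div hden hden_ne).deriv
  -- absolute values
  have habs : ∀ y : ℝ, (‖u (y, t)‖ : ℝ) ^ 2 = 2 * η ^ 2 / Real.cosh (2 * η * y) ^ 2 := by
    intro y
    rw [hu]
    have h1 : 4 * I * (η : ℂ) ^ 2 * (t : ℂ) = ((4 * η ^ 2 * t : ℝ) : ℂ) * I := by
      push_cast; ring
    have h2 : 2 * (η : ℂ) * (y : ℂ) = ((2 * η * y : ℝ) : ℂ) := by push_cast; ring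
    rw [h1, h2, ← Complex.ofReal_cosh, norm_div, norm_mul, Complex.norm_exp_ofReal_mul_I,
      Complex.norm_real, Complex.norm_real, Real.norm_eq_abs, Real.norm_eq_abs,
      _root_.abs_of_nonneg (by positivity : (0:ℝ) ≤ Real.sqrt 2 * η),
      _root_.abs_of_nonneg (Real.cosh_pos (x := 2 * η * y)).le, mul_one, div_pow, mul_pow,
      Real.sq_sqrt (by norm_num : (0:ℝ) ≤ 2)]
  -- final computation
  have hux : u (x, t) = c * E / Complex.cosh (k * (x : ℂ)) := by rw [hu, hE, hk]
  rw [habs x, habs (-x), hdt, hdxx, hux]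
  have hch : Complex.cosh (k * (x : ℂ)) = ((Real.cosh (2 * η * x) : ℝ) : ℂ) := by
    rw [Complex.ofReal_cosh]; push_cast [hk]; ring_nf
  have hsh : Complex.sinh (k * (x : ℂ)) = ((Real.sinh (2 * η * x) : ℝ) : ℂ) := by
    rw [Complex.ofReal_sinh]; push_cast [hk]; ring_nf
  have hchx : Real.cosh (2 * η * -x) = Real.cosh (2 * η * x) := by
    rw [show 2 * η * -x = -(2 * η * x) by ring, Real.cosh_neg]
  have hident : ((Real.sinh (2 * η * x) : ℝ) : ℂ) ^ 2 =
      ((Real.cosh (2 * η * x) : ℝ) : ℂ) ^ 2 - 1 := by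
    have h := Real.cosh_sq_sub_sinh_sq (2 * η * x)
    have h2 : Real.sinh (2 * η * x) ^ 2 = Real.cosh (2 * η * x) ^ 2 - 1 := by linarith
    exact_mod_cast h2
  have hchne : ((Real.cosh (2 * η * x) : ℝ) : ℂ) ≠ 0 := by
    exact_mod_cast (Real.cosh_pos (x := 2 * η * x)).ne'
  rw [hch, hsh, hchx]
  set ch : ℝ := Real.cosh (2 * η * x)
  set sh : ℝ := Real.sinh (2 * η * x)
  push_cast
  field_simp
  linear_combination (c * E * (η:ℂ)^2 * 4 * (ch:ℂ)^2) * Complex.I_sq +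
    (c * E * (η:ℂ)^2 * 8) * hident
end

section
/- Let η₁, η₂ > 0 with η₁ ≠ η₂ and g = (η₁+η₂)/(η₂−η₁). For every q ∈ ℂ with |q| ≤ 1, there exist α₁, β₁, α₂, β₂ ∈ ℂ satisfying the symmetry system (i)–(iv) together with α₁*α₂ + β₁*β₂ = q. -/
open Complex

/-- The symmetry system (i)-(iv) relating the eigenvectors of two purely
imaginary eigenvalues, with `g = (η₁+η₂)/(η₂-η₁)`. -/
def symSys (g : ℝ) (α₁ β₁ α₂ β₂ : ℂ) : Prop :=
  (‖α₁‖ ^ 2 + ‖β₁‖ ^ 2 = ‖α₂‖ ^ 2 + ‖β₂‖ ^ 2) ∧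
  (g ^ 2 * ((‖α₁‖ ^ 2 + ‖β₁‖ ^ 2) ^ 2 - 1)
    = (1 - g ^ 2) *
      (1 - ‖(starRingEnd ℂ) α₁ * α₂ + (starRingEnd ℂ) β₁ * β₂‖ ^ 2)) ∧
  (β₁ = (1 + (g : ℂ)) * (α₁ * (starRingEnd ℂ) α₂ + β₁ * (starRingEnd ℂ) β₂) * α₂
        - (g : ℂ) * ((‖α₂‖ ^ 2 + ‖β₂‖ ^ 2 : ℝ) : ℂ) * α₁) ∧
  (β₂ = (g : ℂ) * ((‖α₁‖ ^ 2 + ‖β₁‖ ^ 2 : ℝ) : ℂ) * α₂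
        + (1 - (g : ℂ)) * ((starRingEnd ℂ) α₁ * α₂ + (starRingEnd ℂ) β₁ * β₂) * α₁)

private lemma key1 (g r N s e : ℝ) (hN2 : g^2*N^2 = 1+(g^2-1)*r^2) (hs2 : s^2 = 1-r^2)
    (he : e^2 = 1) :
    (1+(g-1)*r^2)^2 + (g*N*(1+(g-1)*r^2) + (1-g)*r*(g*r*N+e*s))^2
      = (g*r*N+e*s)^2 + (g*N*(g*r*N+e*s) - (1+g)*r*(1+(g-1)*r^2))^2 := by
  linear_combination (r^2 - r^4 - 2*g*r*N*s*e + 2*g*r^2 - g^2*r^2*N^2 + g^2*r^4) * hN2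
    + (-1 + r^2 - 2*g*r^2 - g^2*N^2 + g^2*r^2) * hs2
    + (-s^2 + r^2*s^2 - 2*g*r^2*s^2 - g^2*N^2*s^2 + g^2*r^2*s^2) * he

private lemma key2 (g r N s e : ℝ) (hN2 : g^2*N^2 = 1+(g^2-1)*r^2) (hs2 : s^2 = 1-r^2)
    (he : e^2 = 1) :
    N * ((g*r*N+e*s)*(1+(g-1)*r^2)
        + ((1+g)*r*(1+(g-1)*r^2) - g*N*(g*r*N+e*s))
          * (g*N*(1+(g-1)*r^2) + (1-g)*r*(g*r*N+e*s)))
      = r * ((g*r*N+e*s)^2 + (g*N*(g*r*N+e*s) - (1+g)*r*(1+(g-1)*r^2))^2) := by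
  linear_combination (-N*s*e + r - r^2*N*s*e + r^3 - r^5 - g*r*N^2 - g*r^2*N*s*e + 2*g*r^3
      - g^2*r^3*N^2 + g^2*r^5) * hN2
    + (-r - g*r*N^2) * hs2 + (-r*s^2 - g*r*N^2*s^2) * he

private lemma real_sol (g r : ℝ) (hg2 : 1 < g^2) (hr0 : 0 ≤ r) (hr1 : r ≤ 1) :
    ∃ a b c d N : ℝ, a^2+b^2 = N ∧ c^2+d^2 = N ∧ a*c+b*d = r ∧
      g^2*(N^2-1) = (1-g^2)*(1-r^2) ∧
      b = (1+g)*r*c - g*N*a ∧ d = g*N*c + (1-g)*r*a := by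
  have hg0 : g ≠ 0 := by intro h; rw [h] at hg2; norm_num at hg2
  have hg2pos : (0:ℝ) < g^2 := by positivity
  have hargN : 0 < (1+(g^2-1)*r^2)/g^2 := by
    apply div_pos _ hg2pos
    nlinarith [sq_nonneg r]
  set N := Real.sqrt ((1+(g^2-1)*r^2)/g^2) with hNdef
  have hN0 : 0 < N := Real.sqrt_pos.mpr hargN
  have hN2 : g^2*N^2 = 1+(g^2-1)*r^2 := by
    rw [hNdef, Real.sq_sqrt hargN.le, mul_div_cancel₀ _ (ne_of_gt hg2pos)]
  have hsarg : (0:ℝ) ≤ 1 - r^2 := by nlinarith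
  set s := Real.sqrt (1-r^2) with hsdef
  have hs2 : s^2 = 1-r^2 := Real.sq_sqrt hsarg
  have hs0 : 0 ≤ s := Real.sqrt_nonneg _
  obtain ⟨e, he, heg⟩ : ∃ e : ℝ, e^2 = 1 ∧ 0 ≤ e*(g*r*N) := by
    rcases le_or_gt 0 g with h | h
    · exact ⟨1, by norm_num, by nlinarith [mul_nonneg (mul_nonneg h hr0) hN0.le]⟩
    · exact ⟨-1, by norm_num, by nlinarith [mul_nonneg hr0 hN0.le]⟩
  set K := g*r*N + e*s with hKdef
  set P := 1+(g-1)*r^2 with hPdef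
  have he0 : e ≠ 0 := by intro h; rw [h] at he; norm_num at he
  have hK : K ≠ 0 := by
    intro h0
    have heK : e*K = e*(g*r*N) + s := by
      rw [hKdef]; linear_combination s*he
    rw [h0, mul_zero] at heK
    have hz1 : e*(g*r*N) = 0 := le_antisymm (by linarith) heg
    have hz2 : s = 0 := by linarith
    have h4 : (r-1)*(r+1) = 0 := by linear_combination hs2 - s*hz2
    have hr1' : r = 1 := by
      rcases mul_eq_zero.mp h4 with h5 | h5
      · linarith
      · linarith
    have h6 : g*r*N = 0 := by
      rcases mul_eq_zero.mp hz1 with h5 | h5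
      · exact absurd h5 he0
      · exact h5
    rw [hr1', mul_one] at h6
    exact mul_ne_zero hg0 (ne_of_gt hN0) h6
  set D := K^2 + (g*N*K - (1+g)*r*P)^2 with hDdef
  have hD : 0 < D := by
    have h1 : 0 < K^2 := lt_of_le_of_ne (sq_nonneg K) (Ne.symm (pow_ne_zero 2 hK))
    have h2 : 0 ≤ (g*N*K - (1+g)*r*P)^2 := sq_nonneg _
    rw [hDdef]; linarith
  have hDne : D ≠ 0 := ne_of_gt hD
  set t := Real.sqrt (N/D) with htdef
  have ht2 : t^2 = N/D := Real.sq_sqrt (by positivity)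
  refine ⟨t*K, (1+g)*r*(t*P) - g*N*(t*K), t*P, g*N*(t*P) + (1-g)*r*(t*K), N,
    ?_, ?_, ?_, by linear_combination hN2, by ring, by ring⟩
  · have h1 : (t*K)^2 + ((1+g)*r*(t*P) - g*N*(t*K))^2 = t^2 * D := by
      rw [hDdef]; ring
    rw [h1, ht2, div_mul_cancel₀ _ hDne]
  · have hkey : P^2 + (g*N*P + (1-g)*r*K)^2 = D := by
      rw [hDdef, hKdef, hPdef]
      exact key1 g r N s e hN2 hs2 he
    have h1 : (t*P)^2 + (g*N*(t*P) + (1-g)*r*(t*K))^2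
        = t^2 * (P^2 + (g*N*P + (1-g)*r*K)^2) := by ring
    rw [h1, hkey, ht2, div_mul_cancel₀ _ hDne]
  · have hkey : N * (K*P + ((1+g)*r*P - g*N*K) * (g*N*P + (1-g)*r*K)) = r * D := by
      rw [hDdef, hKdef, hPdef]
      exact key2 g r N s e hN2 hs2 he
    have h1 : (t*K)*(t*P) + ((1+g)*r*(t*P) - g*N*(t*K)) * (g*N*(t*P) + (1-g)*r*(t*K))
        = t^2 * (K*P + ((1+g)*r*P - g*N*K) * (g*N*P + (1-g)*r*K)) := by ring
    rw [h1, ht2, div_mul_eq_mul_div, div_eq_iff hDne]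
    linear_combination hkey

theorem symSys_solvable_of_abs_le_one
    (η₁ η₂ : ℝ) (h₁ : 0 < η₁) (h₂ : 0 < η₂) (hne : η₁ ≠ η₂)
    (g : ℝ) (hg : g = (η₁ + η₂) / (η₂ - η₁))
    (q : ℂ) (hq : ‖q‖ ≤ 1) :
    ∃ α₁ β₁ α₂ β₂ : ℂ, symSys g α₁ β₁ α₂ β₂ ∧
      (starRingEnd ℂ) α₁ * α₂ + (starRingEnd ℂ) β₁ * β₂ = q := by
  have hd : η₂ - η₁ ≠ 0 := sub_ne_zero.mpr (Ne.symm hne)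
  have hdpos : 0 < (η₂ - η₁)^2 :=
    lt_of_le_of_ne (sq_nonneg _) (Ne.symm (pow_ne_zero 2 hd))
  have hg2 : 1 < g^2 := by
    rw [hg, div_pow, lt_div_iff₀ hdpos]
    nlinarith
  set r := ‖q‖ with hrdef
  have hr0 : 0 ≤ r := norm_nonneg q
  obtain ⟨a, b, c, d, N, h1, h2, h3, h4, h5, h6⟩ := real_sol g r hg2 hr0 hq
  set u : ℂ := if q = 0 then 1 else q / ((‖q‖ : ℝ) : ℂ) with hudef
  have hu : ‖u‖ = 1 := by
    rw [hudef]
    split_ifs with h0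
    · simp
    · have h0' : ‖q‖ ≠ 0 := by simpa using h0
      rw [norm_div, Complex.norm_of_nonneg (norm_nonneg q),
        div_self h0']
  have huq : (r : ℂ) * u = q := by
    rw [hudef, hrdef]
    split_ifs with h0
    · simp [h0]
    · have h0' : ((‖q‖ : ℝ) : ℂ) ≠ 0 := by
        simpa using h0
      field_simp
  have huu : u * (starRingEnd ℂ) u = 1 := by
    rw [Complex.mul_conj, Complex.normSq_eq_norm_sq, hu]
    norm_num
  have habs : ∀ x : ℝ, ‖(x : ℂ)‖ ^ 2 = x ^ 2 := fun x => by
    rw [Complex.norm_real, Real.norm_eq_abs, _root_.sq_abs]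
  have habsu : ∀ x : ℝ, ‖u * (x : ℂ)‖ ^ 2 = x ^ 2 := fun x => by
    rw [norm_mul, hu, one_mul, Complex.norm_real, Real.norm_eq_abs, _root_.sq_abs]
  have hinner : (starRingEnd ℂ) (a : ℂ) * (u * (c : ℂ))
      + (starRingEnd ℂ) (b : ℂ) * (u * (d : ℂ)) = q := by
    rw [Complex.conj_ofReal, Complex.conj_ofReal]
    have h : (a : ℂ) * (u * (c : ℂ)) + (b : ℂ) * (u * (d : ℂ))
        = u * (((a*c + b*d : ℝ)) : ℂ) := by push_cast; ring
    rw [h, h3, mul_comm]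
    exact huq
  have h1' : ‖(a : ℂ)‖ ^ 2 + ‖(b : ℂ)‖ ^ 2 = N := by
    rw [habs, habs]; exact h1
  have h2' : ‖u * (c : ℂ)‖ ^ 2 + ‖u * (d : ℂ)‖ ^ 2 = N := by
    rw [habsu, habsu]; exact h2
  refine ⟨(a : ℂ), (b : ℂ), u * (c : ℂ), u * (d : ℂ), ⟨?_, ?_, ?_, ?_⟩, hinner⟩
  · rw [h1', h2']
  · rw [hinner, ← hrdef, h1', h4]
  · rw [h2']
    simp only [map_mul, Complex.conj_ofReal]
    have hexp : (1 + (g:ℂ)) * ((a:ℂ) * ((starRingEnd ℂ) u * (c:ℂ))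
          + (b:ℂ) * ((starRingEnd ℂ) u * (d:ℂ))) * (u * (c:ℂ))
        = (u * (starRingEnd ℂ) u) * ((1 + (g:ℂ)) * (((a*c + b*d : ℝ)) : ℂ) * (c:ℂ)) := by
      push_cast; ring
    rw [hexp, huu, one_mul, h3, h5]
    push_cast
    ring
  · rw [h1', hinner, ← huq, h6]
    push_cast
    ring
end

section
/- Let η₁, η₂ > 0 with η₁ ≠ η₂ and g = (η₁+η₂)/(η₂−η₁). If α₁, β₁, α₂, β₂ ∈ ℂ satisfy the symmetry system (i)–(iv), then |α₁*α₂ + β₁*β₂| ≤ 1. -/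
open Complex

theorem symSys_implies_abs_le_one
    (η₁ η₂ : ℝ) (h₁ : 0 < η₁) (h₂ : 0 < η₂) (hne : η₁ ≠ η₂)
    (g : ℝ) (hg : g = (η₁ + η₂) / (η₂ - η₁))
    (α₁ β₁ α₂ β₂ : ℂ) (h : symSys g α₁ β₁ α₂ β₂) :
    ‖(starRingEnd ℂ) α₁ * α₂ + (starRingEnd ℂ) β₁ * β₂‖ ≤ 1 := by
  obtain ⟨h1, h2, -, -⟩ := h
  set S := ‖(starRingEnd ℂ) α₁ * α₂ + (starRingEnd ℂ) β₁ * β₂‖ with hSdef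
  -- g² > 1
  have hd : η₂ - η₁ ≠ 0 := fun hh => hne (by linarith [sub_eq_zero.mp hh])
  have hg2 : 1 < g ^ 2 := by
    rw [hg, div_pow, lt_div_iff₀ (by positivity)]
    nlinarith [mul_pos h₁ h₂]
  -- Cauchy–Schwarz
  have hCS : S ≤ ‖α₁‖ * ‖α₂‖ + ‖β₁‖ * ‖β₂‖ := by
    calc S ≤ ‖(starRingEnd ℂ) α₁ * α₂‖ + ‖(starRingEnd ℂ) β₁ * β₂‖ :=
          norm_add_le _ _
      _ = ‖α₁‖ * ‖α₂‖ + ‖β₁‖ * ‖β₂‖ := by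
          simp [map_mul]
  have hS0 : 0 ≤ S := norm_nonneg _
  have hN2 : S ^ 2 ≤ (‖α₁‖ ^ 2 + ‖β₁‖ ^ 2) ^ 2 := by
    have := mul_le_mul hCS hCS hS0 (by positivity)
    nlinarith [sq_nonneg (‖α₁‖ * ‖β₂‖ - ‖α₂‖ * ‖β₁‖)]
  by_contra hc
  push_neg at hc
  nlinarith [mul_nonneg (sq_nonneg g) (sub_nonneg.mpr hN2), sq_nonneg (S - 1)]
end

section
/- Let η₁, η₂ > 0 with η₁ ≠ η₂, set ζ₁ = iη₁ and ζ₂ = iη₂, and let α₁, β₁, α₂, β₂ ∈ ℂ. If C₁ = C₂, C₃ = C₄, A₂ = B₁ and A₃ = B₄, then also A₁ = B₂ and A₄ = B₃; that is, only two of the four conditions A₁ = B₂, A₂ = B₁, A₃ = B₄, A₄ = B₃ are independent once the two C-conditions hold. -/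
open Complex

noncomputable def A₁ (ζ₁ ζ₂ α₁ β₁ α₂ β₂ : ℂ) : ℂ :=
  (1 / ((starRingEnd ℂ) ζ₂ - ζ₂) - 1 / ((starRingEnd ℂ) ζ₁ - ζ₂)) * α₁

noncomputable def A₂ (ζ₁ ζ₂ α₁ β₁ α₂ β₂ : ℂ) : ℂ :=
  α₁ * ((‖α₂‖ ^ 2 + ‖β₂‖ ^ 2 : ℝ) : ℂ) / ((starRingEnd ℂ) ζ₂ - ζ₂)
    - α₂ * (α₁ * (starRingEnd ℂ) α₂ + β₁ * (starRingEnd ℂ) β₂) / ((starRingEnd ℂ) ζ₂ - ζ₁)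

noncomputable def A₃ (ζ₁ ζ₂ α₁ β₁ α₂ β₂ : ℂ) : ℂ :=
  α₂ * ((‖α₁‖ ^ 2 + ‖β₁‖ ^ 2 : ℝ) : ℂ) / ((starRingEnd ℂ) ζ₁ - ζ₁)
    - α₁ * ((starRingEnd ℂ) α₁ * α₂ + (starRingEnd ℂ) β₁ * β₂) / ((starRingEnd ℂ) ζ₁ - ζ₂)

noncomputable def A₄ (ζ₁ ζ₂ α₁ β₁ α₂ β₂ : ℂ) : ℂ :=
  (1 / ((starRingEnd ℂ) ζ₁ - ζ₁) - 1 / ((starRingEnd ℂ) ζ₂ - ζ₁)) * α₂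

noncomputable def B₁ (ζ₁ ζ₂ α₁ β₁ α₂ β₂ : ℂ) : ℂ :=
  (1 / ((starRingEnd ℂ) ζ₂ - ζ₂) - 1 / ((starRingEnd ℂ) ζ₁ - ζ₂)) * β₁

noncomputable def B₂ (ζ₁ ζ₂ α₁ β₁ α₂ β₂ : ℂ) : ℂ :=
  β₁ * ((‖α₂‖ ^ 2 + ‖β₂‖ ^ 2 : ℝ) : ℂ) / ((starRingEnd ℂ) ζ₂ - ζ₂)
    - β₂ * (α₁ * (starRingEnd ℂ) α₂ + β₁ * (starRingEnd ℂ) β₂) / ((starRingEnd ℂ) ζ₂ - ζ₁)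

noncomputable def B₃ (ζ₁ ζ₂ α₁ β₁ α₂ β₂ : ℂ) : ℂ :=
  β₂ * ((‖α₁‖ ^ 2 + ‖β₁‖ ^ 2 : ℝ) : ℂ) / ((starRingEnd ℂ) ζ₁ - ζ₁)
    - β₁ * ((starRingEnd ℂ) α₁ * α₂ + (starRingEnd ℂ) β₁ * β₂) / ((starRingEnd ℂ) ζ₁ - ζ₂)

noncomputable def B₄ (ζ₁ ζ₂ α₁ β₁ α₂ β₂ : ℂ) : ℂ :=
  (1 / ((starRingEnd ℂ) ζ₁ - ζ₁) - 1 / ((starRingEnd ℂ) ζ₂ - ζ₁)) * β₂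

noncomputable def C₁ (ζ₁ ζ₂ α₁ β₁ α₂ β₂ : ℂ) : ℂ :=
  1 / (((starRingEnd ℂ) ζ₁ - ζ₁) * ((starRingEnd ℂ) ζ₂ - ζ₂))
    + 1 / ((‖(starRingEnd ℂ) ζ₁ - ζ₂‖ ^ 2 : ℝ) : ℂ)

noncomputable def C₂ (ζ₁ ζ₂ α₁ β₁ α₂ β₂ : ℂ) : ℂ :=
  (((‖α₁‖ ^ 2 + ‖β₁‖ ^ 2) * (‖α₂‖ ^ 2 + ‖β₂‖ ^ 2) : ℝ) : ℂ)
      / (((starRingEnd ℂ) ζ₁ - ζ₁) * ((starRingEnd ℂ) ζ₂ - ζ₂))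
    + ((‖(starRingEnd ℂ) α₁ * α₂ + (starRingEnd ℂ) β₁ * β₂‖ ^ 2 : ℝ) : ℂ)
      / ((‖(starRingEnd ℂ) ζ₁ - ζ₂‖ ^ 2 : ℝ) : ℂ)

noncomputable def C₃ (ζ₁ ζ₂ α₁ β₁ α₂ β₂ : ℂ) : ℂ :=
  ((‖α₁‖ ^ 2 + ‖β₁‖ ^ 2 : ℝ) : ℂ)
    / (((starRingEnd ℂ) ζ₁ - ζ₁) * ((starRingEnd ℂ) ζ₂ - ζ₂))

noncomputable def C₄ (ζ₁ ζ₂ α₁ β₁ α₂ β₂ : ℂ) : ℂ :=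
  ((‖α₂‖ ^ 2 + ‖β₂‖ ^ 2 : ℝ) : ℂ)
    / (((starRingEnd ℂ) ζ₁ - ζ₁) * ((starRingEnd ℂ) ζ₂ - ζ₂))

noncomputable def C₅ (ζ₁ ζ₂ α₁ β₁ α₂ β₂ : ℂ) : ℂ :=
  (α₁ * (starRingEnd ℂ) α₂ + β₁ * (starRingEnd ℂ) β₂)
    / ((‖(starRingEnd ℂ) ζ₁ - ζ₂‖ ^ 2 : ℝ) : ℂ)

theorem two_AB_conditions_imply_other_two
    (η₁ η₂ : ℝ) (h₁ : 0 < η₁) (h₂ : 0 < η₂) (hne : η₁ ≠ η₂)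
    (ζ₁ ζ₂ : ℂ) (hζ₁ : ζ₁ = I * η₁) (hζ₂ : ζ₂ = I * η₂)
    (α₁ β₁ α₂ β₂ : ℂ)
    (hC12 : C₁ ζ₁ ζ₂ α₁ β₁ α₂ β₂ = C₂ ζ₁ ζ₂ α₁ β₁ α₂ β₂)
    (hC34 : C₃ ζ₁ ζ₂ α₁ β₁ α₂ β₂ = C₄ ζ₁ ζ₂ α₁ β₁ α₂ β₂)
    (hA2B1 : A₂ ζ₁ ζ₂ α₁ β₁ α₂ β₂ = B₁ ζ₁ ζ₂ α₁ β₁ α₂ β₂)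
    (hA3B4 : A₃ ζ₁ ζ₂ α₁ β₁ α₂ β₂ = B₄ ζ₁ ζ₂ α₁ β₁ α₂ β₂) :
    A₁ ζ₁ ζ₂ α₁ β₁ α₂ β₂ = B₂ ζ₁ ζ₂ α₁ β₁ α₂ β₂ ∧
    A₄ ζ₁ ζ₂ α₁ β₁ α₂ β₂ = B₃ ζ₁ ζ₂ α₁ β₁ α₂ β₂ := by
  subst hζ₁ hζ₂
  have habs : ∀ z : ℂ, ((‖z‖ ^ 2 : ℝ) : ℂ) = z * (starRingEnd ℂ) z := fun z => by
    rw [Complex.sq_norm, Complex.mul_conj]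
  have hd1 : ∀ x y : ℝ, -(Complex.I * (x:ℂ)) - Complex.I * (y:ℂ)
      = -(Complex.I * ((x:ℂ) + (y:ℂ))) := fun x y => by ring
  have hd2 : ∀ x y : ℝ, Complex.I * (x:ℂ) - -(Complex.I * (y:ℂ))
      = Complex.I * ((x:ℂ) + (y:ℂ)) := fun x y => by ring
  have hd3 : ∀ x y : ℝ, Complex.I * (x:ℂ) + Complex.I * (y:ℂ)
      = Complex.I * ((x:ℂ) + (y:ℂ)) := fun x y => by ring
  have he1 : (η₁:ℂ) + η₁ ≠ 0 := by
    rw [← Complex.ofReal_add]; exact Complex.ofReal_ne_zero.2 (by positivity)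
  have he2 : (η₂:ℂ) + η₂ ≠ 0 := by
    rw [← Complex.ofReal_add]; exact Complex.ofReal_ne_zero.2 (by positivity)
  have hes : (η₁:ℂ) + η₂ ≠ 0 := by
    rw [← Complex.ofReal_add]; exact Complex.ofReal_ne_zero.2 (by positivity)
  have hes' : (η₂:ℂ) + η₁ ≠ 0 := by rw [add_comm]; exact hes
  have hη1 : (η₁:ℂ) ≠ 0 := Complex.ofReal_ne_zero.2 h₁.ne'
  have hη2 : (η₂:ℂ) ≠ 0 := Complex.ofReal_ne_zero.2 h₂.ne'
  have hdd : (η₁:ℂ) - η₂ ≠ 0 := by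
    rw [← Complex.ofReal_sub]; exact Complex.ofReal_ne_zero.2 (sub_ne_zero.2 hne)
  have hdd' : (η₂:ℂ) - η₁ ≠ 0 := by
    rw [← Complex.ofReal_sub]; exact Complex.ofReal_ne_zero.2 (sub_ne_zero.2 (Ne.symm hne))
  simp only [A₁, A₂, A₃, A₄, B₁, B₂, B₃, B₄, C₁, C₂, C₃, C₄, Complex.ofReal_add,
    Complex.ofReal_mul, habs, map_add, map_mul, map_sub, map_neg, Complex.conj_I,
    Complex.conj_ofReal, Complex.conj_conj, neg_mul, neg_neg, hd1, hd2, hd3]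
    at hC12 hC34 hA2B1 hA3B4 ⊢
  field_simp [Complex.I_ne_zero, he1, he2, hes, hes'] at hC12 hC34 hA2B1 hA3B4
  constructor
  · field_simp [Complex.I_ne_zero, he1, he2, hes, hes']
    refine mul_left_cancel₀ (mul_ne_zero hη1 hdd) ?_
    linear_combination
      ((η₁:ℂ) * (α₂ * (starRingEnd ℂ) α₂ + β₂ * (starRingEnd ℂ) β₂) * ((η₁:ℂ) + η₂)) * hA2B1
      + (2 * (η₁:ℂ) * (η₂:ℂ) * (α₁ * (starRingEnd ℂ) α₂ + β₁ * (starRingEnd ℂ) β₂)) * hA3B4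
      - ((η₁:ℂ) * ((η₁:ℂ) + η₂) * α₁) * hC12
      - ((η₁:ℂ) * ((η₁:ℂ) + η₂) * (α₁ * ((η₁:ℂ) + η₂)^2 * (α₂ * (starRingEnd ℂ) α₂ + β₂ * (starRingEnd ℂ) β₂) - 2 * (η₂:ℂ) * ((η₁:ℂ) + η₂) * α₂ * (α₁ * (starRingEnd ℂ) α₂ + β₁ * (starRingEnd ℂ) β₂))) * hC34
  · field_simp [Complex.I_ne_zero, he1, he2, hes, hes']
    refine mul_left_cancel₀ (mul_ne_zero hη2 hdd') ?_
    linear_combination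
      ((η₂:ℂ) * (α₁ * (starRingEnd ℂ) α₁ + β₁ * (starRingEnd ℂ) β₁) * ((η₁:ℂ) + η₂)) * hA3B4
      + (2 * (η₁:ℂ) * (η₂:ℂ) * ((starRingEnd ℂ) α₁ * α₂ + (starRingEnd ℂ) β₁ * β₂)) * hA2B1
      - ((η₂:ℂ) * ((η₁:ℂ) + η₂) * α₂) * hC12
      + ((η₂:ℂ) * ((η₁:ℂ) + η₂) * (α₂ * ((η₁:ℂ) + η₂)^2 * (α₁ * (starRingEnd ℂ) α₁ + β₁ * (starRingEnd ℂ) β₁) - 2 * (η₁:ℂ) * ((η₁:ℂ) + η₂) * α₁ * ((starRingEnd ℂ) α₁ * α₂ + (starRingEnd ℂ) β₁ * β₂))) * hC34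
end
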